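/- Let K be a field and A = (α_{mn}) an M×N matrix with entries in T. Suppose there is a constant C₂ ≥ 0 such that for all nonnegative integers U₁,…,U_N, V₁,…,V_M, dim V(U₁,…,U_N; V₁,…,V_M) ≤ max(0, U₁+⋯+U_N − V₁−⋯−V_M) + C₂. Then A is strongly badly approximable with constant C₁ = (M+N)² + (M+N)C₂; that is, e^{−(M+N)² − (M+N)C₂} < (∏_{m=1}^M ‖Σ_{n=1}^N α_{mn} ξ_n‖)·(∏_{n=1}^N max(|ξ_n|,1)) for all nonzero ξ ∈ K[x]^N. -/

import Mathlib

open scoped BigOperators Classical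

noncomputable section

variable {K : Type*} [Field K]

/-- `x` as an element of `L = K((x⁻¹))`, realized as the Laurent series in `t = x⁻¹`
supported at the single exponent `-1`. -/
def xL (K : Type*) [Field K] : LaurentSeries K := HahnSeries.single (-1 : ℤ) 1

/-- The embedding of the polynomial ring `K[x]` into `L = K((x⁻¹))`. -/
def toL (P : Polynomial K) : LaurentSeries K := Polynomial.aeval (xL K) P

/-- The absolute value on `L`: `|0| = 0` and `|F| = e^M` where `M` is the degree in `x`
of the leading term of `F` (i.e. `M = -(order of F as a series in t = x⁻¹)`). -/
def absL (F : LaurentSeries K) : ℝ := if F = 0 then 0 else Real.exp (-(F.order : ℝ))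

/-- `‖F‖`, the distance from `F` to the nearest polynomial in `x`. -/
def normL (F : LaurentSeries K) : ℝ :=
  sInf { r : ℝ | ∃ P : Polynomial K, r = absL (F - toL P) }

/-- The solution space `V(U₁,…,U_N; V₁,…,V_M)` of the system
`|ξ_n| < e^{U_n}` and `‖∑_n α_{mn} ξ_n‖ < e^{-V_m}`. -/
def VSet {M N : ℕ} (A : Matrix (Fin M) (Fin N) (LaurentSeries K))
    (U : Fin N → ℕ) (V : Fin M → ℕ) : Set (Fin N → Polynomial K) :=
  { ξ | (∀ n, absL (toL (ξ n)) < Real.exp (U n)) ∧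
        (∀ m, normL (∑ n, A m n * toL (ξ n)) < Real.exp (-(V m : ℝ))) }

/-- `dim V(U₁,…,U_N; V₁,…,V_M)` as a `K`-vector space. -/
def dimV {M N : ℕ} (A : Matrix (Fin M) (Fin N) (LaurentSeries K))
    (U : Fin N → ℕ) (V : Fin M → ℕ) : ℕ :=
  Module.finrank K (Submodule.span K (VSet A U V))

/-- An `M × N` matrix with entries in `T = L/K[x]` is strongly badly approximable if
there is `C₁ > 0` with `e^{-C₁} < (∏_m ‖∑_n α_{mn} ξ_n‖) (∏_n max(|ξ_n|,1))`
for all nonzero `ξ ∈ K[x]^N`. -/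
def StronglyBadlyApproximable {M N : ℕ}
    (A : Matrix (Fin M) (Fin N) (LaurentSeries K)) : Prop :=
  ∃ C₁ : ℝ, 0 < C₁ ∧ ∀ ξ : Fin N → Polynomial K, ξ ≠ 0 →
    Real.exp (-C₁) <
      (∏ m, normL (∑ n, A m n * toL (ξ n))) * (∏ n, max (absL (toL (ξ n))) 1)

/-- The `V × U` Hankel matrix `M_{U;V}(α)` with `(i,j)` entry `a_{i+j-1}` (1-indexed),
where `a_i` is the coefficient of `x^{-i}` in `α`. -/
def hankel (α : LaurentSeries K) (U V : ℕ) : Matrix (Fin V) (Fin U) K :=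
  Matrix.of fun i j => α.coeff ((i : ℤ) + (j : ℤ) + 1)

/-- The block matrix `M_{U₁,…,U_N; V₁,…,V_M}(A)` whose `(m,n)` block is
`M_{U_n; V_m}(α_{mn})`. -/
def blockM {M N : ℕ} (A : Matrix (Fin M) (Fin N) (LaurentSeries K))
    (U : Fin N → ℕ) (V : Fin M → ℕ) :
    Matrix ((m : Fin M) × Fin (V m)) ((n : Fin N) × Fin (U n)) K :=
  Matrix.of fun i j => hankel (A i.1 j.1) (U j.1) (V i.1) i.2 j.2

lemma xL_pow (i : ℕ) : (xL K) ^ i = HahnSeries.single (-(i : ℤ)) 1 := by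
  rw [xL, HahnSeries.single_pow]; simp

lemma algebraMap_L (c : K) : algebraMap K (LaurentSeries K) c = HahnSeries.single 0 c := by
  rw [HahnSeries.algebraMap_apply' (Γ := ℤ) (R := K) c]
  rw [show algebraMap K (PowerSeries K) c = PowerSeries.C c from rfl,
    HahnSeries.ofPowerSeries_C, HahnSeries.C_apply]

lemma toL_monomial (n : ℕ) (a : K) :
    toL (Polynomial.monomial n a) = HahnSeries.single (-(n : ℤ)) a := by
  rw [toL, Polynomial.aeval_monomial, algebraMap_L, xL_pow, HahnSeries.single_mul_single,
    zero_add, mul_one]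

lemma toL_coeff (P : Polynomial K) (k : ℤ) :
    (toL P).coeff k = if k ≤ 0 then P.coeff (-k).toNat else 0 := by
  induction P using Polynomial.induction_on' with
  | add p q hp hq =>
    rw [toL, map_add, ← toL, ← toL, HahnSeries.coeff_add, hp, hq, Polynomial.coeff_add]
    split <;> simp
  | monomial n a =>
    rw [toL_monomial, HahnSeries.coeff_single, Polynomial.coeff_monomial]
    split_ifs <;> first | rfl | (exfalso; omega)

lemma toL_coeff_neg (P : Polynomial K) (n : ℕ) : (toL P).coeff (-(n : ℤ)) = P.coeff n := by
  rw [toL_coeff, if_pos (by omega)]; congr 1; omega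

lemma toL_injective : Function.Injective (toL (K := K)) := by
  intro P Q hPQ
  ext n
  have := congrArg (fun F => HahnSeries.coeff F (-(n : ℤ))) hPQ
  simpa only [toL_coeff_neg] using this

lemma toL_order (P : Polynomial K) (hP : P ≠ 0) : (toL P).order = -(P.natDegree : ℤ) := by
  have hne : toL P ≠ 0 := fun h => hP (toL_injective (h.trans (map_zero _).symm))
  refine le_antisymm (HahnSeries.order_le_of_coeff_ne_zero ?_) ?_
  · rw [toL_coeff_neg]
    exact Polynomial.leadingCoeff_ne_zero.mpr hP
  · have hco : (toL P).coeff (toL P).order ≠ 0 := by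
      rw [← HahnSeries.leadingCoeff_eq]; exact HahnSeries.leadingCoeff_ne_zero.mpr hne
    rw [toL_coeff] at hco
    by_cases hle : (toL P).order ≤ 0
    · rw [if_pos hle] at hco
      have hdeg := Polynomial.le_natDegree_of_ne_zero hco
      omega
    · rw [if_neg hle] at hco; exact absurd rfl hco

lemma absL_toL (P : Polynomial K) (hP : P ≠ 0) :
    absL (toL P) = Real.exp (P.natDegree : ℝ) := by
  have hne : toL P ≠ 0 := fun h => hP (toL_injective (h.trans (map_zero _).symm))
  rw [absL, if_neg hne, toL_order P hP]
  norm_num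

lemma toL_sub (P Q : Polynomial K) : toL (P - Q) = toL P - toL Q := by
  unfold toL; rw [map_sub]

lemma toL_mul (P Q : Polynomial K) : toL (P * Q) = toL P * toL Q := by
  unfold toL; rw [map_mul]

lemma toL_ne_zero {P : Polynomial K} (hP : P ≠ 0) : toL P ≠ 0 :=
  fun h => hP (toL_injective (h.trans (map_zero _).symm))

lemma absL_nonneg (F : LaurentSeries K) : 0 ≤ absL F := by
  rw [absL]; split
  · exact le_refl 0
  · exact (Real.exp_pos _).le

lemma absL_mul (F G : LaurentSeries K) : absL (F * G) = absL F * absL G := by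
  by_cases hF : F = 0
  · simp [absL, hF]
  by_cases hG : G = 0
  · simp [absL, hG]
  have hFG : F * G ≠ 0 := mul_ne_zero hF hG
  rw [absL, absL, absL, if_neg hF, if_neg hG, if_neg hFG,
    HahnSeries.order_mul hF hG, ← Real.exp_add]
  push_cast
  ring_nf

/-- the "tail" predicate: all coefficients at exponents `≤ 0` vanish. -/
def TailOK (G : LaurentSeries K) : Prop := ∀ k : ℤ, k ≤ 0 → G.coeff k = 0

lemma order_pos_of_tail {G : LaurentSeries K} (h : TailOK G) (hG : G ≠ 0) :
    1 ≤ G.order := by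
  by_contra hlt
  push_neg at hlt
  exact (by rw [← HahnSeries.leadingCoeff_eq]; exact HahnSeries.leadingCoeff_ne_zero.mpr hG :
    G.coeff G.order ≠ 0) (h _ (by omega))

lemma absL_le_of_tail {G : LaurentSeries K} (h : TailOK G) :
    absL G ≤ Real.exp (-1 : ℝ) := by
  by_cases hG : G = 0
  · rw [absL, if_pos hG]; exact (Real.exp_pos _).le
  · rw [absL, if_neg hG]
    apply Real.exp_le_exp.mpr
    have := order_pos_of_tail h hG
    have : (1 : ℝ) ≤ (G.order : ℝ) := by exact_mod_cast this
    linarith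

lemma exists_decomp (F : LaurentSeries K) :
    ∃ P₀ : Polynomial K, TailOK (F - toL P₀) := by
  classical
  set D : ℕ := F.order.natAbs with hD
  refine ⟨∑ i ∈ Finset.range (D + 1), Polynomial.monomial i (F.coeff (-(i : ℤ))), ?_⟩
  intro k hk
  have hcoeffP : ∀ j : ℕ,
      (∑ i ∈ Finset.range (D + 1), Polynomial.monomial i (F.coeff (-(i : ℤ)))).coeff j
      = if j ∈ Finset.range (D + 1) then F.coeff (-(j : ℤ)) else 0 := by
    intro j
    rw [Polynomial.finset_sum_coeff]
    simp_rw [Polynomial.coeff_monomial]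
    rw [Finset.sum_ite_eq' (Finset.range (D + 1)) j (fun i => F.coeff (-(i : ℤ)))]
  rw [HahnSeries.coeff_sub, toL_coeff, if_pos hk, hcoeffP]
  by_cases hmem : (-k).toNat ∈ Finset.range (D + 1)
  · rw [if_pos hmem]
    have : -((-k).toNat : ℤ) = k := by omega
    rw [this, sub_self]
  · rw [if_neg hmem, sub_zero]
    rw [Finset.mem_range] at hmem
    by_cases hF : F = 0
    · rw [hF]; rfl
    · apply HahnSeries.coeff_eq_zero_of_lt_order
      have : -(D : ℤ) ≤ F.order := by omega
      omega

lemma normL_le (F : LaurentSeries K) (P : Polynomial K) :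
    normL F ≤ absL (F - toL P) := by
  apply csInf_le
  · exact ⟨0, fun r ⟨Q, hQ⟩ => hQ ▸ absL_nonneg _⟩
  · exact ⟨P, rfl⟩

lemma normL_nonneg (F : LaurentSeries K) : 0 ≤ normL F := by
  apply le_csInf
  · exact ⟨absL (F - toL 0), 0, rfl⟩
  · rintro r ⟨Q, rfl⟩; exact absL_nonneg _

lemma normL_eq {F : LaurentSeries K} {P₀ : Polynomial K} (h : TailOK (F - toL P₀)) :
    normL F = absL (F - toL P₀) := by
  refine le_antisymm (normL_le F P₀) (le_csInf ⟨absL (F - toL 0), 0, rfl⟩ ?_)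
  rintro r ⟨P, rfl⟩
  by_cases hPP : P = P₀
  · subst hPP; exact le_refl _
  · -- F - toL P = (F - toL P₀) + toL (P₀ - P), and the latter has order ≤ 0
    have hsub : P₀ - P ≠ 0 := sub_ne_zero.mpr (Ne.symm hPP)
    have hHne : toL (P₀ - P) ≠ 0 := toL_ne_zero hsub
    have hdec : F - toL P = (F - toL P₀) + toL (P₀ - P) := by
      rw [toL_sub]; ring
    have hHorder : (toL (P₀ - P)).order ≤ 0 := by
      rw [toL_order _ hsub]; omega
    have hcoeff : (F - toL P).coeff (toL (P₀ - P)).order ≠ 0 := by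
      rw [hdec, HahnSeries.coeff_add, h _ hHorder, zero_add]
      rw [← HahnSeries.leadingCoeff_eq]; exact HahnSeries.leadingCoeff_ne_zero.mpr hHne
    have hne : F - toL P ≠ 0 := fun h0 => hcoeff (by rw [h0]; rfl)
    have horder : (F - toL P).order ≤ 0 :=
      le_trans (HahnSeries.order_le_of_coeff_ne_zero hcoeff) hHorder
    calc absL (F - toL P₀) ≤ Real.exp (-1 : ℝ) := absL_le_of_tail h
    _ ≤ Real.exp 0 := Real.exp_le_exp.mpr (by norm_num)
    _ ≤ Real.exp (-((F - toL P).order : ℝ)) := by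
        apply Real.exp_le_exp.mpr
        have : ((F - toL P).order : ℝ) ≤ 0 := by exact_mod_cast horder
        linarith
    _ = absL (F - toL P) := by rw [absL, if_neg hne]

lemma normL_lt_one (F : LaurentSeries K) : normL F < 1 := by
  obtain ⟨P₀, h⟩ := exists_decomp F
  calc normL F = absL (F - toL P₀) := normL_eq h
  _ ≤ Real.exp (-1 : ℝ) := absL_le_of_tail h
  _ < 1 := by rw [← Real.exp_zero]; exact Real.exp_lt_exp.mpr (by norm_num)

lemma normL_mul_le (Q : Polynomial K) (F : LaurentSeries K) :
    normL (toL Q * F) ≤ absL (toL Q) * normL F := by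
  obtain ⟨P₀, h⟩ := exists_decomp F
  have : toL Q * F - toL (Q * P₀) = toL Q * (F - toL P₀) := by
    rw [toL_mul]; ring
  calc normL (toL Q * F) ≤ absL (toL Q * F - toL (Q * P₀)) := normL_le _ _
  _ = absL (toL Q) * absL (F - toL P₀) := by rw [this, absL_mul]
  _ = absL (toL Q) * normL F := by rw [normL_eq h]

lemma degree_lt_of_absL {p : Polynomial K} {u : ℕ} (h : absL (toL p) < Real.exp u) :
    p.degree < (u : WithBot ℕ) := by
  by_cases hp : p = 0
  · subst hp
    rw [Polynomial.degree_zero]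
    exact_mod_cast (WithBot.bot_lt_coe u)
  · rw [absL_toL p hp, Real.exp_lt_exp, Nat.cast_lt] at h
    exact (Polynomial.natDegree_lt_iff_degree_lt hp).mp h

/-- the multiplication-by-ξ linear map -/
def mulXi {N : ℕ} (ξ : Fin N → Polynomial K) :
    Polynomial K →ₗ[K] (Fin N → Polynomial K) where
  toFun Q := fun n => Q * ξ n
  map_add' Q R := by funext n; simp [add_mul]
  map_smul' c Q := by funext n; simp [Polynomial.smul_eq_C_mul]; ring

lemma dim_ge {M N : ℕ} (A : Matrix (Fin M) (Fin N) (LaurentSeries K))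
    (U : Fin N → ℕ) (V : Fin M → ℕ) (ξ : Fin N → Polynomial K) (hξ : ξ ≠ 0) (t : ℕ)
    (hmem : ∀ Q : Polynomial K, Q ∈ Polynomial.degreeLT K t →
      (fun n => Q * ξ n) ∈ VSet A U V) :
    t ≤ dimV A U V := by
  classical
  -- the big finite-dimensional module containing VSet
  set Φ : (∀ n : Fin N, ↥(Polynomial.degreeLT K (U n))) →ₗ[K] (Fin N → Polynomial K) :=
    LinearMap.pi (fun n => (Polynomial.degreeLT K (U n)).subtype ∘ₗ LinearMap.proj n) with hΦ
  haveI : ∀ n : Fin N, FiniteDimensional K ↥(Polynomial.degreeLT K (U n)) := by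
    intro n
    exact Module.Finite.of_basis
      ((Pi.basisFun K (Fin (U n))).map (Polynomial.degreeLTEquiv K (U n)).symm)
  have hVsub : VSet A U V ⊆ ↑(LinearMap.range Φ) := by
    rintro ζ ⟨h1, _⟩
    refine ⟨fun n => ⟨ζ n, Polynomial.mem_degreeLT.mpr (degree_lt_of_absL (h1 n))⟩, ?_⟩
    funext n; rfl
  have hspan_le : Submodule.span K (VSet A U V) ≤ LinearMap.range Φ :=
    Submodule.span_le.mpr hVsub
  haveI : FiniteDimensional K ↥(Submodule.span K (VSet A U V)) :=
    Submodule.finiteDimensional_of_le hspan_le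
  -- the t-dimensional subspace of multiples of ξ
  have hinj : Function.Injective (mulXi ξ) := by
    intro Q R hQR
    obtain ⟨n₀, hn₀⟩ : ∃ n, ξ n ≠ 0 := by
      by_contra hall
      push_neg at hall
      exact hξ (funext hall)
    have := congrFun hQR n₀
    exact mul_right_cancel₀ hn₀ this
  have hW₀le : (Polynomial.degreeLT K t).map (mulXi ξ) ≤ Submodule.span K (VSet A U V) := by
    rintro x ⟨Q, hQ, rfl⟩
    exact Submodule.subset_span (hmem Q hQ)
  have hrank : Module.finrank K ↥((Polynomial.degreeLT K t).map (mulXi ξ)) = t := by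
    rw [← LinearEquiv.finrank_eq (Submodule.equivMapOfInjective (mulXi ξ) hinj
      (Polynomial.degreeLT K t))]
    rw [LinearEquiv.finrank_eq (Polynomial.degreeLTEquiv K t)]
    simp [Module.finrank_pi]
  calc t = Module.finrank K ↥((Polynomial.degreeLT K t).map (mulXi ξ)) := hrank.symm
  _ ≤ dimV A U V := Submodule.finrank_mono hW₀le

lemma toL_zero : toL (0 : Polynomial K) = 0 := map_zero (Polynomial.aeval (xL K))

lemma absL_zero : absL (0 : LaurentSeries K) = 0 := by rw [absL, if_pos rfl]

lemma normL_zero : normL (0 : LaurentSeries K) = 0 := by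
  refine le_antisymm ?_ (normL_nonneg _)
  have := normL_le (0 : LaurentSeries K) 0
  rwa [toL_zero, sub_zero, absL_zero] at this

theorem sba_of_dimV_le' {K : Type*} [Field K] {M N : ℕ}
    (A : Matrix (Fin M) (Fin N) (LaurentSeries K)) (C₂ : ℝ) (hC₂ : 0 ≤ C₂)
    (h : ∀ (U : Fin N → ℕ) (V : Fin M → ℕ),
      (dimV A U V : ℝ) ≤
        ((max 0 ((∑ n, (U n : ℤ)) - ∑ m, (V m : ℤ)) : ℤ) : ℝ) + C₂) :
    ∀ ξ : Fin N → Polynomial K, ξ ≠ 0 →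
      Real.exp (-(((M : ℝ) + N) ^ 2 + ((M : ℝ) + N) * C₂)) <
        (∏ m, normL (∑ n, A m n * toL (ξ n))) * (∏ n, max (absL (toL (ξ n))) 1) := by
  intro ξ hξ
  by_contra hcon
  push_neg at hcon
  rcases Nat.eq_zero_or_pos N with hN0 | hNpos
  · subst hN0; exact hξ (Subsingleton.elim _ _)
  rcases Nat.eq_zero_or_pos M with hM0 | hMpos
  · subst hM0
    simp only [Finset.univ_eq_empty, Finset.prod_empty, one_mul] at hcon
    have h1 : (1 : ℝ) ≤ ∏ n, max (absL (toL (ξ n))) 1 := by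
      calc (1 : ℝ) = ∏ _n : Fin N, 1 := by simp
      _ ≤ ∏ n, max (absL (toL (ξ n))) 1 :=
        Finset.prod_le_prod (fun n _ => by norm_num) (fun n _ => le_max_right _ _)
    have h2 : Real.exp (-((((0:ℕ) : ℝ) + N) ^ 2 + (((0:ℕ) : ℝ) + N) * C₂)) < 1 := by
      rw [Real.exp_lt_one_iff]
      have hN1 : (1 : ℝ) ≤ (N : ℝ) := by exact_mod_cast hNpos
      nlinarith
    linarith
  have hM1 : (1 : ℝ) ≤ (M : ℝ) := by exact_mod_cast hMpos
  have hN1 : (1 : ℝ) ≤ (N : ℝ) := by exact_mod_cast hNpos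
  set C₁ : ℝ := ((M : ℝ) + N) ^ 2 + ((M : ℝ) + N) * C₂ with hC₁
  set F : Fin M → LaurentSeries K := fun m => ∑ n, A m n * toL (ξ n) with hF
  choose P₀ hP₀ using fun m => exists_decomp (F m)
  set G : Fin M → LaurentSeries K := fun m => F m - toL (P₀ m) with hG
  set U : Fin N → ℕ := fun n => if ξ n = 0 then 0 else (ξ n).natDegree + 1 with hU
  set SU : ℕ := ∑ n, U n with hSU
  set B : ℕ := ⌈(SU : ℝ) + C₁⌉₊ with hB
  set V : Fin M → ℕ := fun m => if G m = 0 then B else ((G m).order.toNat - 1) with hV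
  set SVr : ℝ := ∑ m, (V m : ℝ) with hSVr
  -- basic facts about the orders
  have horder : ∀ m, G m ≠ 0 → 1 ≤ (G m).order := fun m hm => order_pos_of_tail (hP₀ m) hm
  have hVm : ∀ m, G m ≠ 0 → (V m : ℤ) = (G m).order - 1 := by
    intro m hm
    have := horder m hm
    simp only [hV, if_neg hm]
    omega
  have hnormF : ∀ m, G m ≠ 0 → normL (F m) = Real.exp (-((V m : ℝ) + 1)) := by
    intro m hm
    rw [normL_eq (hP₀ m), absL, if_neg hm]
    congr 1
    have h1 := hVm m hm
    have h2 : ((V m : ℝ)) = (((G m).order : ℤ) : ℝ) - 1 := by exact_mod_cast h1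
    push_cast at h2 ⊢
    linarith
  -- Claim A : sum inequality
  have hA : (SU : ℝ) ≤ SVr + M + N - C₁ := by
    by_cases hz : ∃ m, G m = 0
    · obtain ⟨m₀, hm₀⟩ := hz
      have hVm₀ : (SU : ℝ) + C₁ ≤ (V m₀ : ℝ) := by
        simp only [hV, if_pos hm₀]
        exact Nat.le_ceil _
      have hle : (V m₀ : ℝ) ≤ SVr :=
        Finset.single_le_sum (f := fun m => (V m : ℝ)) (fun m _ => by positivity)
          (Finset.mem_univ m₀)
      linarith
    · push_neg at hz
      have hprodnorm : ∏ m, normL (F m) = Real.exp (∑ m, -((V m : ℝ) + 1)) := by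
        rw [Real.exp_sum]
        exact Finset.prod_congr rfl fun m _ => hnormF m (hz m)
      have hprodmax : Real.exp (∑ n, ((U n : ℝ) - 1)) ≤ ∏ n, max (absL (toL (ξ n))) 1 := by
        rw [Real.exp_sum]
        apply Finset.prod_le_prod (fun n _ => (Real.exp_pos _).le)
        intro n _
        by_cases hxn : ξ n = 0
        · simp only [hU, if_pos hxn]
          calc Real.exp (((0:ℕ) : ℝ) - 1) ≤ Real.exp 0 := Real.exp_le_exp.mpr (by norm_num)
          _ = 1 := Real.exp_zero
          _ ≤ max (absL (toL (ξ n))) 1 := le_max_right _ _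
        · have : (U n : ℝ) - 1 = ((ξ n).natDegree : ℝ) := by
            simp only [hU, if_neg hxn]; push_cast; ring
          rw [this, ← absL_toL _ hxn]
          exact le_max_left _ _
      have hmul : Real.exp (∑ n, ((U n : ℝ) - 1)) * Real.exp (∑ m, -((V m : ℝ) + 1))
          ≤ Real.exp (-C₁) := by
        calc Real.exp (∑ n, ((U n : ℝ) - 1)) * Real.exp (∑ m, -((V m : ℝ) + 1))
            ≤ (∏ n, max (absL (toL (ξ n))) 1) * ∏ m, normL (F m) := by
              rw [hprodnorm]
              exact mul_le_mul_of_nonneg_right hprodmax (Real.exp_pos _).le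
        _ = (∏ m, normL (F m)) * ∏ n, max (absL (toL (ξ n))) 1 := by ring
        _ ≤ Real.exp (-C₁) := hcon
      rw [← Real.exp_add, Real.exp_le_exp] at hmul
      have e1 : ∑ n, ((U n : ℝ) - 1) = (SU : ℝ) - N := by
        rw [Finset.sum_sub_distrib]
        simp [hSU, Finset.card_univ]
      have e2 : ∑ m, -((V m : ℝ) + 1) = -SVr - M := by
        simp only [neg_add, Finset.sum_add_distrib, Finset.sum_neg_distrib,
          Finset.sum_const, Finset.card_univ, Fintype.card_fin, nsmul_eq_mul, mul_one, hSVr]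
        rw [← Finset.sum_neg_distrib]
        ring
      rw [e1, e2] at hmul
      linarith
  -- parameters for the dimension argument
  set t : ℕ := ⌊C₂⌋₊ + 1 with ht
  have ht1 : C₂ < t := by
    have := Nat.lt_floor_add_one C₂
    push_cast
    exact_mod_cast this
  have ht2 : (t : ℝ) ≤ C₂ + 1 := by
    have := Nat.floor_le hC₂
    rw [ht]
    push_cast
    linarith
  set U' : Fin N → ℕ := fun n => U n + t with hU'
  set V' : Fin M → ℕ := fun m => V m + 1 - t with hV'
  -- Claim B : membership
  have hBmem : ∀ Q : Polynomial K, Q ∈ Polynomial.degreeLT K t →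
      (fun n => Q * ξ n) ∈ VSet A U' V' := by
    intro Q hQmem
    have hsumQ : ∀ m : Fin M, ∑ n, A m n * toL (Q * ξ n) = toL Q * F m := by
      intro m
      rw [hF, Finset.mul_sum]
      exact Finset.sum_congr rfl fun n _ => by rw [toL_mul]; ring
    constructor
    · -- degree conditions
      intro n
      simp only
      by_cases hQ0 : Q * ξ n = 0
      · rw [hQ0, toL_zero, absL_zero]
        exact Real.exp_pos _
      · have hQ : Q ≠ 0 := fun hh => hQ0 (by rw [hh, zero_mul])
        have hxn : ξ n ≠ 0 := fun hh => hQ0 (by rw [hh, mul_zero])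
        have hdq : Q.natDegree < t :=
          (Polynomial.natDegree_lt_iff_degree_lt hQ).mpr (Polynomial.mem_degreeLT.mp hQmem)
        rw [absL_toL _ hQ0, Real.exp_lt_exp]
        have hmul : (Q * ξ n).natDegree = Q.natDegree + (ξ n).natDegree :=
          Polynomial.natDegree_mul hQ hxn
        have hUn : U n = (ξ n).natDegree + 1 := by simp only [hU, if_neg hxn]
        have : (Q * ξ n).natDegree < U' n := by
          simp only [hU']
          omega
        exact_mod_cast this
    · -- norm conditions
      intro m
      simp only
      rw [hsumQ m]
      by_cases hV'0 : V' m = 0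
      · rw [hV'0]
        calc normL (toL Q * F m) < 1 := normL_lt_one _
        _ = Real.exp (-((0:ℕ) : ℝ)) := by norm_num
      · by_cases hQ : Q = 0
        · rw [hQ, toL_zero, zero_mul, normL_zero]
          exact Real.exp_pos _
        by_cases hGm : G m = 0
        · have hFm : normL (F m) = 0 := by
            have hGm2 : F m - toL (P₀ m) = 0 := hGm
            rw [normL_eq (hP₀ m), hGm2]
            exact absL_zero
          calc normL (toL Q * F m) ≤ absL (toL Q) * normL (F m) := normL_mul_le _ _
          _ = 0 := by rw [hFm, mul_zero]
          _ < _ := Real.exp_pos _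
        · have hdq : Q.natDegree < t :=
            (Polynomial.natDegree_lt_iff_degree_lt hQ).mpr (Polynomial.mem_degreeLT.mp hQmem)
          have htle : t ≤ V m + 1 := by
            by_contra hcontra
            exact hV'0 (by simp only [hV']; omega)
          have hV'cast : (V' m : ℝ) = (V m : ℝ) + 1 - t := by
            simp only [hV']
            rw [Nat.cast_sub htle]
            push_cast
            ring
          calc normL (toL Q * F m) ≤ absL (toL Q) * normL (F m) := normL_mul_le _ _
          _ = Real.exp ((Q.natDegree : ℝ)) * Real.exp (-((V m : ℝ) + 1)) := by
              rw [absL_toL _ hQ, hnormF m hGm]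
          _ = Real.exp ((Q.natDegree : ℝ) - ((V m : ℝ) + 1)) := by
              rw [← Real.exp_add]; ring_nf
          _ < Real.exp (-(V' m : ℝ)) := by
              rw [Real.exp_lt_exp, hV'cast]
              have : (Q.natDegree : ℝ) < t := by exact_mod_cast hdq
              linarith
  -- Claim C and final arithmetic
  have hdim : (t : ℝ) ≤ (dimV A U' V' : ℝ) := by
    exact_mod_cast dim_ge A U' V' ξ hξ t hBmem
  have hh := h U' V'
  set X : ℤ := (∑ n, (U' n : ℤ)) - ∑ m, (V' m : ℤ) with hX
  have hht : (t : ℝ) ≤ ((max 0 X : ℤ) : ℝ) + C₂ := le_trans hdim (le_trans hh (le_refl _))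
  rcases le_or_gt X 0 with hX0 | hX0
  · rw [max_eq_left hX0] at hht
    simp only [Int.cast_zero, zero_add] at hht
    linarith
  · rw [max_eq_right hX0.le] at hht
    have h1 : (∑ n, (U' n : ℤ)) = (SU : ℤ) + N * t := by
      simp only [hU']
      push_cast
      rw [Finset.sum_add_distrib]
      simp only [Finset.sum_const, Finset.card_univ, Fintype.card_fin, nsmul_eq_mul, hSU]
      push_cast
      ring
    have h2 : (∑ m, (V m : ℤ)) + M - M * t ≤ ∑ m, (V' m : ℤ) := by
      have hle : ∀ m ∈ Finset.univ, (V m : ℤ) + 1 - t ≤ ((V' m : ℕ) : ℤ) := by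
        intro m _
        simp only [hV']
        omega
      calc (∑ m, (V m : ℤ)) + M - M * t = ∑ m, ((V m : ℤ) + 1 - t) := by
            rw [Finset.sum_sub_distrib, Finset.sum_add_distrib]
            simp [Finset.card_univ, mul_comm]
      _ ≤ ∑ m, (V' m : ℤ) := Finset.sum_le_sum hle
    have hXle : (X : ℝ) ≤ (SU : ℝ) + N * t - (SVr + M - M * t) := by
      have : X ≤ ((SU : ℤ) + N * t) - ((∑ m, (V m : ℤ)) + M - M * t) := by
        rw [hX, h1]
        omega
      have hcast : (((∑ m, (V m : ℤ)) : ℤ) : ℝ) = SVr := by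
        push_cast [hSVr]
        rfl
      calc (X : ℝ) ≤ (((SU : ℤ) + N * t - ((∑ m, (V m : ℤ)) + M - M * t) : ℤ) : ℝ) := by
            exact_mod_cast this
      _ = (SU : ℝ) + N * t - (SVr + M - M * t) := by
            push_cast [← hcast]
            ring
    -- combine everything
    have hfinal : (t : ℝ) ≤ (X : ℝ) + C₂ := hht
    have hkey : C₁ ≤ (N : ℝ) + C₂ + ((M : ℝ) + N - 1) * t := by
      have := hA
      nlinarith
    have hprod : ((M : ℝ) + N - 1) * t ≤ ((M : ℝ) + N - 1) * (C₂ + 1) := by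
      apply mul_le_mul_of_nonneg_left ht2
      linarith
    rw [hC₁] at hkey
    nlinarith

/-- if there is `C₂ ≥ 0` with
`dim V(U₁,…,U_N; V₁,…,V_M) ≤ max(0, U₁+⋯+U_N − V₁−⋯−V_M) + C₂` for all nonnegative
integers `U`, `V`, then `A` is strongly badly approximable with constant
`C₁ = (M+N)² + (M+N)C₂`. -/
theorem sba_of_dimV_le {K : Type*} [Field K] {M N : ℕ}
    (A : Matrix (Fin M) (Fin N) (LaurentSeries K)) (C₂ : ℝ) (hC₂ : 0 ≤ C₂)
    (h : ∀ (U : Fin N → ℕ) (V : Fin M → ℕ),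
      (dimV A U V : ℝ) ≤
        ((max 0 ((∑ n, (U n : ℤ)) - ∑ m, (V m : ℤ)) : ℤ) : ℝ) + C₂) :
    ∀ ξ : Fin N → Polynomial K, ξ ≠ 0 →
      Real.exp (-(((M : ℝ) + N) ^ 2 + ((M : ℝ) + N) * C₂)) <
        (∏ m, normL (∑ n, A m n * toL (ξ n))) * (∏ n, max (absL (toL (ξ n))) 1) := by
  exact sba_of_dimV_le' A C₂ hC₂ h
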